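/- Let G be a connected finite simple graph with n vertices and m edges, and let C be a graphic parity network for G of size exactly m + n − 1 (a perfect graphic parity network). Then there exists a wire w ∈ V(G) that is not the target of any gate of C. -/

import Mathlib

/-- Apply a CNOT gate `g = (control, target)` to a state `t : V → Finset V`:
the target wire receives the symmetric difference of the control and target terms,
all other wires are unchanged. -/
def applyGate {V : Type*} [DecidableEq V] (g : V × V) (t : V → Finset V) : V → Finset V :=
  fun w => if w = g.2 then symmDiff (t g.1) (t g.2) else t w

/-- Run a circuit (a list of CNOT gates) from the initial state `term v = {v}`. -/
def runCircuit {V : Type*} [DecidableEq V] (C : List (V × V)) : V → Finset V :=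
  C.foldl (fun t g => applyGate g t) (fun v => {v})

/-- `C` is a graphic parity network for the graph `G`:
every gate has distinct control and target, every edge `{u, v}` of `G` appears as the
term of some wire after some prefix of the circuit, and the final state is the initial
state. Its size is `C.length`. -/
def IsGPN {V : Type*} [DecidableEq V] (G : SimpleGraph V) (C : List (V × V)) : Prop :=
  (∀ g ∈ C, g.1 ≠ g.2) ∧
  (∀ u v : V, G.Adj u v → ∃ (k : ℕ) (w : V), runCircuit (C.take k) w = {u, v}) ∧
  (∀ v : V, runCircuit C v = {v})

namespace Stmt19

variable {V : Type*} [DecidableEq V]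

def F : Sym2 V → Finset V := Sym2.lift ⟨fun u v => {u, v}, fun u v => Finset.pair_comm u v⟩

lemma F_mk (u v : V) : F s(u, v) = {u, v} := rfl

lemma F_inj : Function.Injective (F (V := V)) := by
  intro e e'
  induction e using Sym2.inductionOn with | hf u v => ?_
  induction e' using Sym2.inductionOn with | hf u' v' => ?_
  intro hF
  have : ({u, v} : Set V) = {u', v'} := by
    have := congrArg (fun s : Finset V => (s : Set V)) hF
    simpa [F_mk] using this
  rw [Set.pair_eq_pair_iff] at this
  rw [Sym2.eq_iff]
  tauto

lemma foldl_unchanged (L : List (V × V)) (t : V → Finset V) (w : V)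
    (h : ∀ g ∈ L, g.2 ≠ w) :
    L.foldl (fun t g => applyGate g t) t w = t w := by
  induction L generalizing t with
  | nil => rfl
  | cons g L ih =>
    simp only [List.foldl_cons]
    rw [ih _ (fun g hg => h g (List.mem_cons_of_mem _ hg))]
    simp [applyGate, (h g List.mem_cons_self).symm, Ne]

lemma runCircuit_take_succ (C : List (V × V)) (k : ℕ) (h : k < C.length) :
    runCircuit (C.take (k + 1)) = applyGate C[k] (runCircuit (C.take k)) := by
  unfold runCircuit
  rw [← List.take_concat_get' C k h, List.foldl_append]
  rfl

lemma runCircuit_eq_of_no_target (C : List (V × V)) (k : ℕ) (w : V)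
    (h : ∀ g ∈ C.drop k, g.2 ≠ w) :
    runCircuit C w = runCircuit (C.take k) w := by
  conv_lhs => rw [← List.take_append_drop k C]
  unfold runCircuit
  rw [List.foldl_append]
  exact foldl_unchanged _ _ _ h

theorem main {V : Type*} [Fintype V] [DecidableEq V] (G : SimpleGraph V)
    (hconn : G.Connected) (C : List (V × V))
    (h : (∀ g ∈ C, g.1 ≠ g.2) ∧
      (∀ u v : V, G.Adj u v → ∃ (k : ℕ) (w : V), runCircuit (C.take k) w = {u, v}) ∧
      (∀ v : V, runCircuit C v = {v}))
    (hsize : C.length = Nat.card G.edgeSet + Fintype.card V - 1) :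
    ∃ w : V, ∀ g ∈ C, g.2 ≠ w := by
  by_contra hcon
  push_neg at hcon
  have hex : ∀ e : Sym2 V, e ∈ G.edgeSet → ∃ k, ∃ w, runCircuit (C.take k) w = F e := by
    intro e he
    induction e using Sym2.inductionOn with | hf u v => ?_
    rw [SimpleGraph.mem_edgeSet] at he
    obtain ⟨k, w, hw⟩ := h.2.1 u v he
    exact ⟨k, w, by rw [F_mk]; exact hw⟩
  have hcard : ∀ e : Sym2 V, e ∈ G.edgeSet → (F e).card = 2 := by
    intro e he
    induction e using Sym2.inductionOn with | hf u v => ?_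
    rw [SimpleGraph.mem_edgeSet] at he
    rw [F_mk]
    exact Finset.card_pair he.ne
  classical
  set idx : G.edgeSet → ℕ := fun e => Nat.find (hex e.1 e.2) with hidx
  have hpos : ∀ e : G.edgeSet, 1 ≤ idx e := by
    intro e
    rw [Nat.one_le_iff_ne_zero]
    intro h0
    have hsp := Nat.find_spec (hex e.1 e.2)
    have h0' : Nat.find (hex e.1 e.2) = 0 := h0
    rw [h0'] at hsp
    obtain ⟨w, hw⟩ := hsp
    have hw' : ({w} : Finset V) = F e.1 := hw
    have h2 := hcard e.1 e.2
    rw [← hw'] at h2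
    simp at h2
  have hle : ∀ e : G.edgeSet, idx e ≤ C.length := by
    intro e
    obtain ⟨k, w, hw⟩ := hex e.1 e.2
    have hk : k ≤ C.length := by
      by_contra hk
      push_neg at hk
      rw [List.take_of_length_le hk.le] at hw
      rw [h.2.2 w] at hw
      have h2 := hcard e.1 e.2
      rw [← hw] at h2
      simp at h2
    exact le_trans (Nat.find_min' (hex e.1 e.2) ⟨w, hw⟩) hk
  have key_e : ∀ (e : G.edgeSet) (i : ℕ) (hlt : i < C.length), idx e - 1 = i →
      runCircuit (C.take (i + 1)) ((C[i]'hlt).2) = F e.1 := by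
    intro e i hlt hi
    subst hi
    have h1 := hpos e
    obtain ⟨w, hw⟩ : ∃ w, runCircuit (C.take (idx e)) w = F e.1 := Nat.find_spec (hex e.1 e.2)
    have heq : idx e - 1 + 1 = idx e := by omega
    rw [heq]
    by_cases hwt : w = (C[idx e - 1]'hlt).2
    · rw [← hwt]; exact hw
    · exfalso
      have hts := runCircuit_take_succ C (idx e - 1) hlt
      rw [heq] at hts
      rw [hts] at hw
      have hw' : runCircuit (C.take (idx e - 1)) w = F e.1 := by
        rwa [applyGate, if_neg hwt] at hw
      exact Nat.find_min (hex e.1 e.2) (show idx e - 1 < idx e by omega) ⟨w, hw'⟩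
  have hexQ : ∀ w : V, ∃ j, ∀ g ∈ C.drop (j + 1), g.2 ≠ w := by
    intro w
    refine ⟨C.length, ?_⟩
    rw [List.drop_eq_nil_of_le (by omega)]
    intro g hg
    cases hg
  set lst : V → ℕ := fun w => Nat.find (hexQ w) with hlst
  have hdrop : ∀ w : V, ∃ g ∈ C.drop (lst w), g.2 = w := by
    intro w
    rcases Nat.eq_zero_or_pos (lst w) with h0 | h0
    · rw [h0, List.drop_zero]; exact hcon w
    · have hm := Nat.find_min (hexQ w) (show lst w - 1 < lst w by omega)
      push_neg at hm
      obtain ⟨g, hg, hgw⟩ := hm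
      refine ⟨g, ?_, hgw⟩
      have heq : lst w - 1 + 1 = lst w := by omega
      rwa [heq] at hg
  have hlt_w : ∀ w : V, lst w < C.length := by
    intro w
    by_contra hlt
    push_neg at hlt
    obtain ⟨g, hg, _⟩ := hdrop w
    rw [List.drop_eq_nil_of_le hlt] at hg
    cases hg
  have key_w : ∀ (w : V) (i : ℕ) (hlt : i < C.length), lst w = i →
      (C[i]'hlt).2 = w ∧ runCircuit (C.take (i + 1)) w = {w} := by
    intro w i hlt' hi
    have hQ : ∀ g ∈ C.drop (lst w + 1), g.2 ≠ w := Nat.find_spec (hexQ w)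
    obtain ⟨g, hg, hgw⟩ := hdrop w
    subst hi
    constructor
    · rw [List.drop_eq_getElem_cons hlt'] at hg
      rcases List.mem_cons.mp hg with h1 | h1
      · rw [← h1]; exact hgw
      · exact absurd hgw (hQ g h1)
    · rw [← runCircuit_eq_of_no_target C (lst w + 1) w hQ]
      exact h.2.2 w
  have hlt_e : ∀ e : G.edgeSet, idx e - 1 < C.length := by
    intro e
    have h1 := hpos e
    have h2 := hle e
    omega
  have hne : Nonempty V := hconn.nonempty
  set φ : G.edgeSet ⊕ V → Fin C.length :=
    Sum.elim (fun e => ⟨idx e - 1, hlt_e e⟩) (fun w => ⟨lst w, hlt_w w⟩) with hφ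
  have hφinj : Function.Injective φ := by
    intro x y hxy
    have hval : (φ x).1 = (φ y).1 := congrArg Fin.val hxy
    match x, y with
    | Sum.inl e, Sum.inl e' =>
      simp only [hφ, Sum.elim_inl] at hval
      have he := key_e e (idx e - 1) (hlt_e e) rfl
      have he' := key_e e' (idx e - 1) (hlt_e e) hval.symm
      rw [he] at he'
      exact congrArg Sum.inl (Subtype.ext (F_inj he'))
    | Sum.inr w, Sum.inr w' =>
      simp only [hφ, Sum.elim_inr] at hval
      have hw := (key_w w (lst w) (hlt_w w) rfl).1
      have hw' := (key_w w' (lst w) (hlt_w w) hval.symm).1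
      rw [hw] at hw'
      exact congrArg Sum.inr hw'
    | Sum.inl e, Sum.inr w =>
      exfalso
      simp only [hφ, Sum.elim_inl, Sum.elim_inr] at hval
      have he := key_e e (idx e - 1) (hlt_e e) rfl
      obtain ⟨hw1, hw2⟩ := key_w w (idx e - 1) (hlt_e e) hval.symm
      rw [hw1] at he
      rw [hw2] at he
      have h2 := hcard e.1 e.2
      rw [← he] at h2
      simp at h2
    | Sum.inr w, Sum.inl e =>
      exfalso
      simp only [hφ, Sum.elim_inl, Sum.elim_inr] at hval
      have he := key_e e (idx e - 1) (hlt_e e) rfl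
      obtain ⟨hw1, hw2⟩ := key_w w (idx e - 1) (hlt_e e) hval
      rw [hw1] at he
      rw [hw2] at he
      have h2 := hcard e.1 e.2
      rw [← he] at h2
      simp at h2
  have hcount : Nat.card (G.edgeSet ⊕ V) ≤ Nat.card (Fin C.length) :=
    Nat.card_le_card_of_injective φ hφinj
  rw [Nat.card_sum, Nat.card_eq_fintype_card (α := Fin C.length), Fintype.card_fin,
    Nat.card_eq_fintype_card (α := V)] at hcount
  have hn : 1 ≤ Fintype.card V := Fintype.card_pos
  omega

end Stmt19

/-- If `G` is connected with `n` vertices and `m` edges and `C` is a perfect graphic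
parity network for `G` (its size is exactly `m + n − 1`), then some wire is not the
target of any gate of `C`. -/
theorem stmt19 {V : Type*} [Fintype V] [DecidableEq V] (G : SimpleGraph V)
    (hconn : G.Connected) (C : List (V × V)) (h : IsGPN G C)
    (hsize : C.length = Nat.card G.edgeSet + Fintype.card V - 1) :
    ∃ w : V, ∀ g ∈ C, g.2 ≠ w := by
  exact Stmt19.main G hconn C h hsize
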